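/- Let g be a polynomial in ℝ[x₁,…,x_d] and let β ∈ ℕ^d be a multi-index. If the iterated finite difference Δ^β g is the zero polynomial, where Δ_k g = τ_{e_k} g − g is the forward difference with increment 1 in the k-th variable and Δ^β = Δ₁^{β₁}⋯Δ_d^{β_d}, then the iterated partial derivative ∂^β g is the zero polynomial. -/

import Mathlib

open MvPolynomial

/-- The forward partial difference operator in the `k`-th variable with
increment `1`: `Δ_k g = τ_{e_k} g - g`. -/
noncomputable def fdiff {d : ℕ} (k : Fin d) :
    Module.End ℝ (MvPolynomial (Fin d) ℝ) :=
  (bind₁ fun i : Fin d =>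
      (X i : MvPolynomial (Fin d) ℝ) +
        (C ((Pi.single k 1 : Fin d → ℝ) i) : MvPolynomial (Fin d) ℝ)).toLinearMap -
    LinearMap.id

/-- The iterated difference operator `Δ^β = Δ₁^{β₁} ⋯ Δ_d^{β_d}`. -/
noncomputable def iterFDiff {d : ℕ} (β : Fin d → ℕ) :
    Module.End ℝ (MvPolynomial (Fin d) ℝ) :=
  (List.ofFn fun k : Fin d => fdiff k ^ (β k)).prod

/-- The iterated formal partial derivative `∂^β`. -/
noncomputable def iterPDeriv {d : ℕ} (β : Fin d → ℕ) :
    Module.End ℝ (MvPolynomial (Fin d) ℝ) :=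
  (List.ofFn fun i : Fin d =>
    ((pderiv i).toLinearMap : Module.End ℝ (MvPolynomial (Fin d) ℝ)) ^ (β i)).prod

namespace Stmt11Aux

variable {d : ℕ}

lemma fdiff_apply (k : Fin d) (g : MvPolynomial (Fin d) ℝ) :
    fdiff k g = bind₁ (fun i : Fin d =>
      (X i : MvPolynomial (Fin d) ℝ) + C ((Pi.single k 1 : Fin d → ℝ) i)) g - g := rfl

lemma aeval_eq_eval (x : Fin d → ℝ) (p : MvPolynomial (Fin d) ℝ) :
    MvPolynomial.aeval x p = eval x p := by
  rw [← coe_aeval_eq_eval]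
  rfl

lemma eval_bind₁ (x : Fin d → ℝ) (f : Fin d → MvPolynomial (Fin d) ℝ)
    (p : MvPolynomial (Fin d) ℝ) :
    eval x (bind₁ f p) = eval (fun i => eval x (f i)) p := by
  simp only [← aeval_eq_eval]
  exact aeval_bind₁ x f p

lemma pderiv_pderiv_comm (i j : Fin d) (p : MvPolynomial (Fin d) ℝ) :
    pderiv i (pderiv j p) = pderiv j (pderiv i p) := by
  rcases eq_or_ne i j with rfl | hij
  · rfl
  · induction p using MvPolynomial.induction_on' with
    | monomial s a =>
      simp only [pderiv_monomial]
      rw [Finsupp.tsub_apply, Finsupp.tsub_apply, Finsupp.single_eq_of_ne' hij,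
        Finsupp.single_eq_of_ne' (Ne.symm hij), tsub_zero, tsub_zero,
        tsub_tsub, tsub_tsub, add_comm (Finsupp.single j 1), mul_right_comm]
    | add p q hp hq => simp [hp, hq]

lemma pderiv_bind₁_translate (i : Fin d) (c : Fin d → ℝ) (p : MvPolynomial (Fin d) ℝ) :
    pderiv i (bind₁ (fun j : Fin d => (X j : MvPolynomial (Fin d) ℝ) + C (c j)) p) =
      bind₁ (fun j : Fin d => (X j : MvPolynomial (Fin d) ℝ) + C (c j)) (pderiv i p) := by
  induction p using MvPolynomial.induction_on with
  | C a => simp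
  | add p q hp hq => simp [hp, hq]
  | mul_X p j hp =>
    rcases eq_or_ne j i with rfl | hji
    · simp [pderiv_mul, hp, mul_add, add_mul]
      ring
    · simp [pderiv_mul, hp, hji]

lemma commute_pderiv_fdiff (i k : Fin d) :
    Commute ((pderiv i).toLinearMap : Module.End ℝ (MvPolynomial (Fin d) ℝ)) (fdiff k) := by
  apply LinearMap.ext
  intro p
  show pderiv i (fdiff k p) = fdiff k (pderiv i p)
  rw [fdiff_apply, fdiff_apply, map_sub, pderiv_bind₁_translate]

lemma commute_pderiv_pderiv (i j : Fin d) :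
    Commute ((pderiv i).toLinearMap : Module.End ℝ (MvPolynomial (Fin d) ℝ))
      ((pderiv j).toLinearMap) := by
  apply LinearMap.ext
  intro p
  exact pderiv_pderiv_comm i j p

/-- Key lemma: if `Δ_k g = 0` then `∂_k g = 0`. -/
lemma pderiv_eq_zero_of_fdiff_eq_zero (k : Fin d) (g : MvPolynomial (Fin d) ℝ)
    (h : fdiff k g = 0) : pderiv k g = 0 := by
  set e : Fin d → ℝ := Pi.single k 1 with he
  -- translation invariance by one step
  have hbind : bind₁ (fun i : Fin d => (X i : MvPolynomial (Fin d) ℝ) + C (e i)) g = g := by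
    have h2 := fdiff_apply k g
    rw [h] at h2
    exact sub_eq_zero.mp h2.symm
  -- evaluation form of translation invariance
  have htrans : ∀ x : Fin d → ℝ, eval (fun i => x i + e i) g = eval x g := by
    intro x
    conv_rhs => rw [← hbind]
    rw [eval_bind₁]
    have hfe : (fun i => eval x ((X i : MvPolynomial (Fin d) ℝ) + C (e i)))
        = fun i => x i + e i := by funext i; simp
    rw [hfe]
  have hnat : ∀ (x : Fin d → ℝ) (n : ℕ),
      eval (fun i => x i + n * e i) g = eval x g := by
    intro x n
    induction n with
    | zero => simp
    | succ n ih =>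
      have hfe : (fun i => x i + ((n + 1 : ℕ) : ℝ) * e i)
          = fun i => (x i + (n : ℝ) * e i) + e i := by
        funext i; push_cast; ring
      rw [hfe]
      have := htrans (fun i => x i + (n : ℝ) * e i)
      simpa [ih] using this
  set q : (Fin d → ℝ) → Polynomial ℝ := fun x =>
    MvPolynomial.aeval (fun i => Polynomial.C (x i) + Polynomial.C (e i) * Polynomial.X) g
    with hq
  have heval : ∀ (x : Fin d → ℝ) (t : ℝ),
      (q x).eval t = eval (fun i => x i + e i * t) g := by
    intro x t
    rw [hq, ← Polynomial.coe_aeval_eq_eval]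
    show Polynomial.aeval t (MvPolynomial.aeval _ g) = _
    rw [MvPolynomial.comp_aeval_apply, ← aeval_eq_eval]
    have hfe : (fun i => Polynomial.aeval t (Polynomial.C (x i) + Polynomial.C (e i) * Polynomial.X))
        = fun i => x i + e i * t := by funext i; simp
    rw [hfe]
  have hconst : ∀ (x : Fin d → ℝ) (t : ℝ),
      eval (fun i => x i + e i * t) g = eval x g := by
    intro x t
    have hqc : q x = Polynomial.C (eval x g) := by
      apply Polynomial.eq_of_infinite_eval_eq
      apply Set.Infinite.mono (s := Set.range ((↑·) : ℕ → ℝ))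
      · rintro - ⟨n, rfl⟩
        simp only [Set.mem_setOf_eq, heval, Polynomial.eval_C]
        have hfe : (fun i => x i + e i * (n : ℝ)) = fun i => x i + (n : ℝ) * e i := by
          funext i; ring
        rw [hfe, hnat x n]
      · exact Set.infinite_range_of_injective Nat.cast_injective
    rw [← heval, hqc, Polynomial.eval_C]
  -- g equals its substitution with X k ↦ 0
  have hgeq : bind₁ (Function.update MvPolynomial.X k (0 : MvPolynomial (Fin d) ℝ)) g = g := by
    apply MvPolynomial.funext
    intro x
    rw [eval_bind₁]
    have hfe : (fun i => eval x (Function.update MvPolynomial.X k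
        (0 : MvPolynomial (Fin d) ℝ) i)) = fun i => x i + e i * (-(x k)) := by
      funext i
      rcases eq_or_ne i k with rfl | hik
      · simp [he]
      · simp [Function.update_of_ne hik, he, Pi.single_eq_of_ne hik]
    rw [hfe, hconst]
  -- a polynomial not containing X k has zero k-th partial derivative
  have hpd : ∀ p : MvPolynomial (Fin d) ℝ,
      pderiv k (bind₁ (Function.update MvPolynomial.X k (0 : MvPolynomial (Fin d) ℝ)) p)
        = 0 := by
    intro p
    induction p using MvPolynomial.induction_on with
    | C a => simp
    | add p1 p2 h1 h2 => simp [h1, h2]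
    | mul_X p1 j h1 =>
      rw [map_mul, pderiv_mul, h1, zero_mul, zero_add, bind₁_X_right]
      rcases eq_or_ne j k with rfl | hjk
      · simp
      · simp [Function.update_of_ne hjk, hjk]
  conv_lhs => rw [← hgeq]
  exact hpd g

/-- Iterated version in one variable. -/
lemma pderiv_pow_eq_zero_of_fdiff_pow_eq_zero (k : Fin d) (n : ℕ)
    (g : MvPolynomial (Fin d) ℝ) (h : (fdiff k ^ n) g = 0) :
    (((pderiv k).toLinearMap : Module.End ℝ (MvPolynomial (Fin d) ℝ)) ^ n) g = 0 := by
  induction n generalizing g with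
  | zero => simpa using h
  | succ n ih =>
    rw [pow_succ, Module.End.mul_apply] at h
    have h1 := ih _ h
    have h2 : fdiff k ((((pderiv k).toLinearMap :
        Module.End ℝ (MvPolynomial (Fin d) ℝ)) ^ n) g) = 0 := by
      rw [← Module.End.mul_apply, ← ((commute_pderiv_fdiff k k).pow_left n).eq,
        Module.End.mul_apply, h1]
    have h3 := pderiv_eq_zero_of_fdiff_eq_zero k _ h2
    rw [pow_succ']
    exact h3

lemma list_step (β : Fin d → ℕ) (l : List (Fin d)) :
    ∀ g : MvPolynomial (Fin d) ℝ,
      ((l.map fun k => fdiff k ^ β k).prod) g = 0 →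
      ((l.map fun k => ((pderiv k).toLinearMap :
          Module.End ℝ (MvPolynomial (Fin d) ℝ)) ^ β k).prod) g = 0 := by
  induction l with
  | nil => intro g h; simpa using h
  | cons k l ih =>
    intro g h
    rw [List.map_cons, List.prod_cons, Module.End.mul_apply] at h
    -- h : (fdiff k ^ β k) (P_L g) = 0
    have h1 := pderiv_pow_eq_zero_of_fdiff_pow_eq_zero k (β k) _ h
    -- commute D_k^βk past the product of fdiffs
    have hc : Commute (((pderiv k).toLinearMap :
        Module.End ℝ (MvPolynomial (Fin d) ℝ)) ^ β k)
        ((l.map fun j => fdiff j ^ β j).prod) := by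
      apply Commute.list_prod_right
      intro x hx
      simp only [List.mem_map] at hx
      obtain ⟨j, -, rfl⟩ := hx
      exact (commute_pderiv_fdiff k j).pow_pow _ _
    rw [← Module.End.mul_apply, hc.eq, Module.End.mul_apply] at h1
    have h2 := ih _ h1
    have hc2 : Commute (((pderiv k).toLinearMap :
        Module.End ℝ (MvPolynomial (Fin d) ℝ)) ^ β k)
        ((l.map fun j => ((pderiv j).toLinearMap :
          Module.End ℝ (MvPolynomial (Fin d) ℝ)) ^ β j).prod) := by
      apply Commute.list_prod_right
      intro x hx
      simp only [List.mem_map] at hx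
      obtain ⟨j, -, rfl⟩ := hx
      exact (commute_pderiv_pderiv k j).pow_pow _ _
    rw [List.map_cons, List.prod_cons, Module.End.mul_apply, ← Module.End.mul_apply,
      hc2.eq, Module.End.mul_apply, h2]

end Stmt11Aux

theorem stmt_11 (d : ℕ) (g : MvPolynomial (Fin d) ℝ) (β : Fin d → ℕ)
    (h : iterFDiff β g = 0) : iterPDeriv β g = 0 := by
  have h' := h
  rw [iterFDiff, List.ofFn_eq_map] at h'
  have := Stmt11Aux.list_step β (List.finRange d) g h'
  rw [iterPDeriv, List.ofFn_eq_map]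
  exact this
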